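/- For every integer t ≥ 7, there is no integer x with x^2 = 3^{2t} + (2t)^3 + 2t, since 3^{2t} < x^2 < (3^t + 1)^2. -/
import Mathlib

lemma aux16 (t : ℕ) (ht : 7 ≤ t) : 8 * t ^ 3 + 2 * t < 2 * 3 ^ t := by
  induction t, ht using Nat.le_induction with
  | base => norm_num
  | succ n hn ih =>
    have h3 : 2 * 3 ^ (n + 1) = 3 * (2 * 3 ^ n) := by ring
    have : 8 * (n + 1) ^ 3 + 2 * (n + 1) ≤ 3 * (8 * n ^ 3 + 2 * n) := by nlinarith [hn, sq_nonneg n]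
    omega

theorem stmt_16 (t : ℕ) (ht : 7 ≤ t) :
    ¬ ∃ x : ℤ, x ^ 2 = 3 ^ (2 * t) + (2 * t) ^ 3 + 2 * t := by
  rintro ⟨x, hx⟩
  have key : (8 * (t:ℤ) ^ 3 + 2 * t : ℤ) < 2 * 3 ^ t := by
    exact_mod_cast aux16 t ht
  have hpos : (0:ℤ) < (2 * (t:ℤ)) ^ 3 + 2 * t := by positivity
  have hpm : (3:ℤ) ^ (2 * t) = ((3:ℤ) ^ t) ^ 2 := by rw [mul_comm, pow_mul]
  have h1 : ((3:ℤ) ^ t) ^ 2 < x ^ 2 := by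
    rw [hx, hpm]; push_cast; nlinarith
  have h2 : x ^ 2 < ((3:ℤ) ^ t + 1) ^ 2 := by
    rw [hx, hpm]; push_cast; nlinarith
  have ha : (3:ℤ) ^ t < |x| :=
    lt_of_pow_lt_pow_left₀ 2 (abs_nonneg x) (by rwa [sq_abs])
  have hb : |x| < (3:ℤ) ^ t + 1 :=
    lt_of_pow_lt_pow_left₀ 2 (by positivity) (by rwa [sq_abs])
  have := Int.lt_iff_add_one_le.mp ha
  linarith
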